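/- Let G = (V,D,B) be a mixed graph, v a vertex, s a source vertex, and w ∈ pa(v) a parent of v such that no trek from s to v uses the edge w → v except as its final edge. Then in the trek-rule expansion, σ_{s w} λ_{w v} equals the sum of the trek monomials of all treks from s to v whose final edge is w → v; consequently σ_{s v} − σ_{s w} λ_{w v} is the sum of trek monomials of all treks from s to v not using the edge w → v at all. -/

import Mathlib

open scoped BigOperators

/-- A mixed graph on `n` vertices: directed edges `D` and symmetric bidirected
edges `B`, with no self-loops. -/
structure MixedGraph (n : ℕ) where
  D : Fin n → Fin n → Prop
  B : Fin n → Fin n → Prop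
  B_symm : ∀ i j, B i j → B j i
  D_irrefl : ∀ i, ¬ D i i
  B_irrefl : ∀ i, ¬ B i i

namespace MixedGraph

variable {n : ℕ}

/-- A trek from `v` to `w` in a mixed graph: a walk with no colliding arrowheads,
consisting of a left-hand side `L 0 = v, L 1, …, L p` (each step along a directed
edge `L (i+1) → L i`, traversed backwards from `v` up to the top `L p`),
then either (`bid = true`) one bidirected edge `L p ↔ R 0`, or (`bid = false`)
`L p = R 0`, and a right-hand side `R 0, …, R q = w` walking forwards along
directed edges `R j → R (j+1)`.  Vertices may repeat (treks are walks). -/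
structure Trek (G : MixedGraph n) (v w : Fin n) where
  p : ℕ
  q : ℕ
  L : Fin (p + 1) → Fin n
  R : Fin (q + 1) → Fin n
  hL : ∀ i : Fin p, G.D (L i.succ) (L i.castSucc)
  hR : ∀ i : Fin q, G.D (R i.castSucc) (R i.succ)
  bid : Bool
  hconn : if bid then G.B (L (Fin.last p)) (R 0) else L (Fin.last p) = R 0
  hv : L 0 = v
  hw : R (Fin.last q) = w

namespace Trek

variable {G : MixedGraph n} {v w : Fin n}

/-- The vertices on the left-hand side of a trek (including the top). -/
def leftVerts (π : Trek G v w) : Set (Fin n) := Set.range π.L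

/-- The vertices on the right-hand side of a trek (including the top). -/
def rightVerts (π : Trek G v w) : Set (Fin n) := Set.range π.R

/-- The trek monomial of a trek, with respect to parameter matrices
`lam` (directed edge coefficients) and `om` (error covariances):
`ω_{top-left, top-right} ∏ λ_{x y}` over all directed edges of the trek. -/
def monom {R' : Type*} [CommSemiring R'] (lam om : Fin n → Fin n → R')
    (π : Trek G v w) : R' :=
  om (π.L (Fin.last π.p)) (π.R 0)
    * (∏ i : Fin π.p, lam (π.L i.succ) (π.L i.castSucc))
    * ∏ i : Fin π.q, lam (π.R i.castSucc) (π.R i.succ)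

/-- A half-trek is a trek whose left-hand side consists of a single vertex. -/
def IsHalfTrek (π : Trek G v w) : Prop := π.p = 0

/-- The trek uses the directed edge `a → b` on its left-hand side. -/
def usesLeft (π : Trek G v w) (a b : Fin n) : Prop :=
  ∃ i : Fin π.p, π.L i.succ = a ∧ π.L i.castSucc = b

/-- The trek uses the directed edge `a → b` on its right-hand side. -/
def usesRight (π : Trek G v w) (a b : Fin n) : Prop :=
  ∃ i : Fin π.q, π.R i.castSucc = a ∧ π.R i.succ = b

/-- The trek is non-empty (uses at least one edge). -/
def Nonemp (π : Trek G v w) : Prop := 0 < π.p ∨ 0 < π.q ∨ π.bid = true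

end Trek

/-- `w` is trek reachable from `v`: there is a non-empty trek from `v` to `w`. -/
def tr (G : MixedGraph n) (v w : Fin n) : Prop :=
  ∃ π : Trek G v w, π.Nonemp

/-- `w` is half-trek reachable from `v`. -/
def htr (G : MixedGraph n) (v w : Fin n) : Prop :=
  ∃ π : Trek G v w, π.IsHalfTrek ∧ π.Nonemp

/-- `w` is a descendant of `v` (non-empty directed path from `v` to `w`). -/
def des (G : MixedGraph n) (v w : Fin n) : Prop :=
  Relation.TransGen G.D v w

/-- The parents of `w`. -/
def pa (G : MixedGraph n) (w : Fin n) : Set (Fin n) := {z | G.D z w}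

/-- The siblings of `w`. -/
def sib (G : MixedGraph n) (w : Fin n) : Set (Fin n) := {z | G.B z w}

end MixedGraph


/-! ### Auxiliary material -/

namespace MixedGraph

variable {n : ℕ} {G : MixedGraph n} {s v w : Fin n}

lemma my_snoc_lt {m : ℕ} (f : Fin (m + 1) → Fin n) (x : Fin n) (j : Fin (m + 2))
    (h : j.1 < m + 1) : (Fin.snoc f x : Fin (m + 2) → Fin n) j = f ⟨j.1, h⟩ := by
  simp [Fin.snoc, h]
  congr 1

lemma my_snoc_last' {m : ℕ} (f : Fin (m + 1) → Fin n) (x : Fin n) (j : Fin (m + 2))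
    (h : j.1 = m + 1) : (Fin.snoc f x : Fin (m + 2) → Fin n) j = x := by
  have : j = Fin.last (m + 1) := Fin.ext h
  rw [this, Fin.snoc_last]

lemma Trek.ext' {a b : Fin n} {π π' : Trek G a b} (hp : π.p = π'.p) (hq : π.q = π'.q)
    (hL : ∀ i : Fin (π.p + 1), π.L i = π'.L (Fin.cast (by omega) i))
    (hR : ∀ i : Fin (π.q + 1), π.R i = π'.R (Fin.cast (by omega) i))
    (hb : π.bid = π'.bid) : π = π' := by
  obtain ⟨p, q, L, R, hL1, hR1, bid, hc, hv, hw⟩ := π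
  obtain ⟨p', q', L', R', hL1', hR1', bid', hc', hv', hw'⟩ := π'
  dsimp at hp hq hL hR hb
  subst hp hq hb
  have hLe : L = L' := by funext i; simpa using hL i
  have hRe : R = R' := by funext i; simpa using hR i
  subst hLe hRe
  rfl

/-- Append the edge `w → v` to the right end of a trek from `s` to `w`. -/
def appendTrek (hwv : G.D w v) (τ : Trek G s w) : Trek G s v where
  p := τ.p
  q := τ.q + 1
  L := τ.L
  R := Fin.snoc τ.R v
  hL := τ.hL
  hR := by
    intro i
    rcases Nat.lt_or_ge i.1 τ.q with h | h
    · rw [my_snoc_lt τ.R v i.castSucc (by have := i.isLt; simp; omega),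
        my_snoc_lt τ.R v i.succ (by simp only [Fin.val_succ]; omega)]
      have := τ.hR ⟨i.1, h⟩
      convert this using 2 <;> apply Fin.ext <;> simp
    · have hiq : i.1 = τ.q := by omega
      rw [my_snoc_lt τ.R v i.castSucc (by have := i.isLt; simp; omega),
        my_snoc_last' τ.R v i.succ (by simp [hiq])]
      have : (⟨i.castSucc.1, by have := i.isLt; simp; omega⟩ : Fin (τ.q + 1)) = Fin.last τ.q := by
        apply Fin.ext; simp [hiq]
      rw [this, τ.hw]
      exact hwv
  bid := τ.bid
  hconn := by
    have h0 : (Fin.snoc τ.R v : Fin (τ.q + 2) → Fin n) 0 = τ.R 0 := by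
      rw [my_snoc_lt τ.R v 0 (by simp)]
      congr 1
    rw [h0]
    exact τ.hconn
  hv := τ.hv
  hw := by
    rw [my_snoc_last' τ.R v (Fin.last (τ.q + 1)) rfl]

/-- Drop the final right-hand edge of a trek. -/
def dropTrek (π : Trek G s v) (hq : 0 < π.q)
    (hw' : π.R ⟨π.q - 1, by omega⟩ = w) : Trek G s w where
  p := π.p
  q := π.q - 1
  L := π.L
  R := fun i => π.R (Fin.castLE (by omega) i)
  hL := π.hL
  hR := by
    intro i
    have := π.hR ⟨i.1, by omega⟩
    convert this using 2 <;> apply Fin.ext <;> simp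
  bid := π.bid
  hconn := π.hconn
  hv := π.hv
  hw := hw'

lemma monom_appendTrek {R' : Type*} [CommSemiring R'] (lam om : Fin n → Fin n → R')
    (hwv : G.D w v) (τ : Trek G s w) :
    (appendTrek hwv τ).monom lam om = τ.monom lam om * lam w v := by
  unfold Trek.monom appendTrek
  dsimp only
  rw [Fin.prod_univ_castSucc]
  have h0 : (Fin.snoc τ.R v : Fin (τ.q + 2) → Fin n) 0 = τ.R 0 := by
    rw [my_snoc_lt τ.R v 0 (by simp)]; congr 1
  have hlast : lam ((Fin.snoc τ.R v : Fin (τ.q + 2) → Fin n) (Fin.last τ.q).castSucc)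
      ((Fin.snoc τ.R v : Fin (τ.q + 2) → Fin n) (Fin.last τ.q).succ) = lam w v := by
    rw [my_snoc_lt τ.R v (Fin.last τ.q).castSucc (by simp),
      my_snoc_last' τ.R v (Fin.last τ.q).succ (by simp)]
    have : (⟨(Fin.last τ.q).castSucc.1, by simp⟩ : Fin (τ.q + 1)) = Fin.last τ.q := by
      apply Fin.ext; simp
    rw [this, τ.hw]
  have hmid : ∀ i : Fin τ.q,
      lam ((Fin.snoc τ.R v : Fin (τ.q + 2) → Fin n) i.castSucc.castSucc)
        ((Fin.snoc τ.R v : Fin (τ.q + 2) → Fin n) i.castSucc.succ)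
      = lam (τ.R i.castSucc) (τ.R i.succ) := by
    intro i
    rw [my_snoc_lt τ.R v i.castSucc.castSucc (by simp only [Fin.coe_castSucc]; exact Nat.lt_succ_of_lt i.isLt),
      my_snoc_lt τ.R v i.castSucc.succ (by simp only [Fin.val_succ, Fin.coe_castSucc]; exact Nat.succ_lt_succ i.isLt)]
    congr 1 <;> apply congrArg <;> apply Fin.ext <;> simp
  rw [h0, hlast]
  rw [Finset.prod_congr rfl (fun i _ => hmid i)]
  ring

lemma dropTrek_R (π : Trek G s v) (hq : 0 < π.q)
    (hw' : π.R ⟨π.q - 1, by omega⟩ = w) (i : Fin ((dropTrek π hq hw').q + 1)) :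
    (dropTrek π hq hw').R i = π.R (Fin.castLE (show π.q - 1 + 1 ≤ π.q + 1 by omega) i) := rfl

lemma appendTrek_R (hwv : G.D w v) (τ : Trek G s w) (i : Fin ((appendTrek hwv τ).q + 1)) :
    (appendTrek hwv τ).R i = (Fin.snoc τ.R v : Fin (τ.q + 1 + 1) → Fin n) i := rfl

set_option maxHeartbeats 400000 in
lemma dropTrek_appendTrek (hwv : G.D w v) (τ : Trek G s w) :
    dropTrek (appendTrek hwv τ) (Nat.succ_pos τ.q)
      (by
        show (Fin.snoc τ.R v : Fin (τ.q + 1 + 1) → Fin n) ⟨τ.q + 1 - 1, by omega⟩ = w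
        rw [my_snoc_lt τ.R v ⟨τ.q + 1 - 1, by omega⟩ (Nat.sub_lt (Nat.succ_pos _) Nat.one_pos)]
        have : (⟨τ.q + 1 - 1, by omega⟩ : Fin (τ.q + 1)) = Fin.last τ.q := by
          apply Fin.ext; simp
        rw [this]; exact τ.hw) = τ := by
  apply Trek.ext'
  case hp => rfl
  case hq => rfl
  case hL => intro i; rfl
  case hR =>
    intro i
    refine (dropTrek_R _ _ _ i).trans ?_
    have key : ∀ (j : Fin (τ.q + 1 + 1)) (hj : (j : ℕ) < τ.q + 1) (k : Fin (τ.q + 1)),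
        (j : ℕ) = (k : ℕ) →
        (Fin.snoc τ.R v : Fin (τ.q + 1 + 1) → Fin n) j = τ.R k := by
      intro j hj k hk
      rw [my_snoc_lt τ.R v j hj]
      congr 1
      apply Fin.ext
      exact hk
    exact key _ i.isLt _ rfl
  case hb => rfl

lemma appendTrek_dropTrek (hwv : G.D w v) (π : Trek G s v) (hq : 0 < π.q)
    (hw' : π.R ⟨π.q - 1, by omega⟩ = w) :
    appendTrek hwv (dropTrek π hq hw') = π := by
  apply Trek.ext'
  case hp => rfl
  case hq => show π.q - 1 + 1 = π.q; omega
  case hL => intro i; rfl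
  case hb => rfl
  case hR =>
    intro i
    have hRdef : (appendTrek hwv (dropTrek π hq hw')).R i
        = (Fin.snoc (dropTrek π hq hw').R v : Fin (π.q - 1 + 1 + 1) → Fin n) i := rfl
    rw [hRdef]
    have hb : (i : ℕ) < π.q - 1 + 1 + 1 := i.isLt
    rcases Nat.lt_or_ge i.1 (π.q - 1 + 1) with h | h
    · refine (my_snoc_lt (dropTrek π hq hw').R v i h).trans ?_
      rw [dropTrek_R]
      congr 1
    · have hi : i.1 = π.q := by omega
      refine (my_snoc_last' (dropTrek π hq hw').R v i (by show (i : ℕ) = π.q - 1 + 1; omega)).trans ?_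
      have hlp : ∀ j : Fin (π.q + 1), (j : ℕ) = π.q → π.R j = v := by
        intro j hj
        rw [show j = Fin.last π.q from Fin.ext hj]
        exact π.hw
      exact (hlp _ (by simp [hi])).symm

end MixedGraph

/-! ### STATEMENT 4: peeling off a final edge `w → v` in the trek rule -/

open Matrix MixedGraph MvPowerSeries

noncomputable instance mvPowerSeriesTop (σ : Type*) : TopologicalSpace (MvPowerSeries σ ℚ) :=
  Pi.topologicalSpace

/-- Let `G` be a mixed graph, `v` a vertex, `s` a source vertex and `w` a
parent of `v` such that no trek from `s` to `v` uses the edge `w → v` except as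
its final (right-hand) edge.  Then, in the trek-rule expansion,
`σ_{s w} · λ_{w v}` is the sum of the trek monomials of all treks from `s` to
`v` whose final edge is `w → v`, and consequently `σ_{s v} - σ_{s w} · λ_{w v}`
is the sum of the trek monomials of all treks from `s` to `v` not using the
edge `w → v` at all. -/
instance MyTopAddGroup (σ : Type*) : IsTopologicalAddGroup (MvPowerSeries σ ℚ) :=
  Pi.topologicalAddGroup

lemma my_cont_mul_const {σ : Type*} [DecidableEq σ] (c : MvPowerSeries σ ℚ) :
    Continuous (fun f : MvPowerSeries σ ℚ => f * c) := by
  apply continuous_pi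
  intro d
  have h : (fun f : MvPowerSeries σ ℚ => (f * c) d)
      = fun f : MvPowerSeries σ ℚ => ∑ p ∈ Finset.HasAntidiagonal.antidiagonal d, f p.1 * c p.2 := by
    funext f
    exact MvPowerSeries.coeff_mul (n := d) (φ := f) (ψ := c)
  rw [h]
  exact continuous_finset_sum _ fun p _ => (continuous_apply p.1).mul continuous_const

lemma my_hasSum_mul_const {σ : Type*} [DecidableEq σ] {ι : Type*}
    {f : ι → MvPowerSeries σ ℚ} {a : MvPowerSeries σ ℚ} (h : HasSum f a)
    (c : MvPowerSeries σ ℚ) :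
    HasSum (fun i => f i * c) (a * c) :=
  h.map (AddMonoidHom.mulRight c) (my_cont_mul_const c)

theorem peel_final_edge {n : ℕ} (G : MixedGraph n)
    [DecidableRel G.D] [DecidableRel G.B]
    (lam om : Fin n → Fin n → MvPowerSeries ((Fin n × Fin n) ⊕ (Fin n × Fin n)) ℚ)
    (hlam : ∀ i j, lam i j = if G.D i j then MvPowerSeries.X (Sum.inl (i, j)) else 0)
    (hom : ∀ i j, om i j = if i = j ∨ G.B i j then MvPowerSeries.X (Sum.inr (i, j)) else 0)
    (s v w : Fin n) (hwv : G.D w v)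
    (ssw ssv : MvPowerSeries ((Fin n × Fin n) ⊕ (Fin n × Fin n)) ℚ)
    (hssw : HasSum (fun π : Trek G s w => π.monom lam om) ssw)
    (hssv : HasSum (fun π : Trek G s v => π.monom lam om) ssv)
    (honly : ∀ π : Trek G s v, ¬ π.usesLeft w v ∧
      ∀ i : Fin π.q, π.R i.castSucc = w → π.R i.succ = v → (i : ℕ) + 1 = π.q) :
    HasSum
      (fun π : {π : Trek G s v //
          ∃ i : Fin π.q, (i : ℕ) + 1 = π.q ∧ π.R i.castSucc = w ∧ π.R i.succ = v} =>
        π.1.monom lam om)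
      (ssw * lam w v)
    ∧ HasSum
      (fun π : {π : Trek G s v // ¬ (π.usesLeft w v ∨ π.usesRight w v)} =>
        π.1.monom lam om)
      (ssv - ssw * lam w v) := by
  classical
  -- membership of appended treks
  have mem_append : ∀ τ : Trek G s w, ∃ i : Fin (appendTrek hwv τ).q,
      (i : ℕ) + 1 = (appendTrek hwv τ).q ∧ (appendTrek hwv τ).R i.castSucc = w ∧
      (appendTrek hwv τ).R i.succ = v := by
    intro τ
    refine ⟨⟨τ.q, Nat.lt_succ_self τ.q⟩, rfl, ?_, ?_⟩
    · have h := (appendTrek_R hwv τ (Fin.castSucc ⟨τ.q, Nat.lt_succ_self τ.q⟩)).trans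
        (my_snoc_lt τ.R v _ (Nat.lt_succ_self τ.q))
      exact h.trans τ.hw
    · exact (appendTrek_R hwv τ _).trans (my_snoc_last' τ.R v _ rfl)
  have hpos : ∀ π : Trek G s v,
      (∃ i : Fin π.q, (i : ℕ) + 1 = π.q ∧ π.R i.castSucc = w ∧ π.R i.succ = v) → 0 < π.q := by
    rintro π ⟨i, hi, -, -⟩; omega
  have hlastw : ∀ π : Trek G s v,
      (∃ i : Fin π.q, (i : ℕ) + 1 = π.q ∧ π.R i.castSucc = w ∧ π.R i.succ = v) →
      π.R ⟨π.q - 1, Nat.lt_succ_of_le (Nat.sub_le _ _)⟩ = w := by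
    rintro π ⟨i, hi, hcs, -⟩
    have : (⟨π.q - 1, Nat.lt_succ_of_le (Nat.sub_le _ _)⟩ : Fin (π.q + 1)) = i.castSucc := by
      apply Fin.ext; simp; omega
    rw [this]; exact hcs
  -- the equivalence
  let e : Trek G s w ≃ {π : Trek G s v //
      ∃ i : Fin π.q, (i : ℕ) + 1 = π.q ∧ π.R i.castSucc = w ∧ π.R i.succ = v} :=
    { toFun := fun τ => ⟨appendTrek hwv τ, mem_append τ⟩
      invFun := fun x => dropTrek x.1 (hpos x.1 x.2) (hlastw x.1 x.2)
      left_inv := fun τ => dropTrek_appendTrek hwv τ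
      right_inv := fun x => Subtype.ext (appendTrek_dropTrek hwv x.1 _ _) }
  -- first part
  have h1 : HasSum (fun π : {π : Trek G s v //
      ∃ i : Fin π.q, (i : ℕ) + 1 = π.q ∧ π.R i.castSucc = w ∧ π.R i.succ = v} =>
      π.1.monom lam om) (ssw * lam w v) := by
    have hmul := my_hasSum_mul_const hssw (lam w v)
    have he : ((fun π : {π : Trek G s v //
        ∃ i : Fin π.q, (i : ℕ) + 1 = π.q ∧ π.R i.castSucc = w ∧ π.R i.succ = v} =>
        π.1.monom lam om) ∘ e) = fun τ : Trek G s w => τ.monom lam om * lam w v := by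
      funext τ
      exact monom_appendTrek lam om hwv τ
    rw [← he] at hmul
    exact e.hasSum_iff.mp hmul
  refine ⟨h1, ?_⟩
  -- second part
  set S : Set (Trek G s v) := {π | ∃ i : Fin π.q,
    (i : ℕ) + 1 = π.q ∧ π.R i.castSucc = w ∧ π.R i.succ = v} with hSdef
  have hS1 : HasSum ((fun π : Trek G s v => π.monom lam om) ∘ ((↑) : S → Trek G s v))
      (ssw * lam w v) := h1
  have hcompl : HasSum ((fun π : Trek G s v => π.monom lam om) ∘ ((↑) : ↥Sᶜ → Trek G s v))
      (ssv - ssw * lam w v) := (hS1.hasSum_iff_compl).mp hssv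
  have hiff : ∀ π : Trek G s v, π ∈ Sᶜ ↔ ¬ (π.usesLeft w v ∨ π.usesRight w v) := by
    intro π
    constructor
    · intro hnot hor
      apply hnot
      rcases hor with hL | hR
      · exact absurd hL (honly π).1
      · obtain ⟨i, hcs, hsv⟩ := hR
        exact ⟨i, (honly π).2 i hcs hsv, hcs, hsv⟩
    · rintro hnot ⟨i, hi, hcs, hsv⟩
      exact hnot (Or.inr ⟨i, hcs, hsv⟩)
  let e2 : ↥Sᶜ ≃ {π : Trek G s v // ¬ (π.usesLeft w v ∨ π.usesRight w v)} :=
    Equiv.subtypeEquivRight hiff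
  have he2 : ((fun π : {π : Trek G s v // ¬ (π.usesLeft w v ∨ π.usesRight w v)} =>
      π.1.monom lam om) ∘ e2)
      = ((fun π : Trek G s v => π.monom lam om) ∘ ((↑) : ↥Sᶜ → Trek G s v)) := rfl
  rw [← he2] at hcompl
  exact e2.hasSum_iff.mp hcompl
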